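/- arXiv:2107.07673 — 4 statements merged into one kernel-verified Lean document; each statement's English description precedes it below -/
import Mathlib

section
/- Let V be a real Hilbert space, a : V × V → ℝ a continuous coercive bilinear form, B : V → V a monotone, bounded, Lipschitz-continuous (nonlinear) operator, and ℓ ∈ V'. Then the operator A : V → V' defined by ⟨Au, v⟩ = a(u, v) + ⟨B u, v⟩ is strictly monotone and coercive, and the equation ⟨Au, v⟩ = ℓ(v) for all v ∈ V has a unique solution u ∈ V. -/
/-- Minty–Browder setting: if `a` is a continuous coercive bilinear form, `B` a monotone,
bounded, Lipschitz operator, and `ℓ ∈ V'`, then `⟨Au, v⟩ = a(u,v) + ⟨Bu, v⟩` defines a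
strictly monotone, coercive operator, and `⟨Au, v⟩ = ℓ(v)` for all `v` has a unique
solution. -/
theorem minty_browder_penalized {V : Type*} [NormedAddCommGroup V]
    [InnerProductSpace ℝ V] [CompleteSpace V]
    (a : V → V → ℝ)
    (ha1 : ∀ v, IsLinearMap ℝ (fun u => a u v)) (ha2 : ∀ u, IsLinearMap ℝ (a u))
    (M : ℝ) (hcont : ∀ u v, |a u v| ≤ M * ‖u‖ * ‖v‖)
    (α : ℝ) (hα : 0 < α) (hcoer : ∀ v, α * ‖v‖ ^ 2 ≤ a v v)
    (B : V → V)
    (hmono : ∀ u v, 0 ≤ (inner ℝ (B u - B v) (u - v) : ℝ))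
    (hbdd : ∀ s : Set V, Bornology.IsBounded s → Bornology.IsBounded (B '' s))
    (L : NNReal) (hlip : LipschitzWith L B)
    (ℓ : V →L[ℝ] ℝ) :
    (∀ u v, u ≠ v →
      0 < (a u (u - v) + (inner ℝ (B u) (u - v) : ℝ))
            - (a v (u - v) + (inner ℝ (B v) (u - v) : ℝ))) ∧
    (∀ C : ℝ, ∃ R : ℝ, ∀ v, R ≤ ‖v‖ → C * ‖v‖ ≤ a v v + (inner ℝ (B v) v : ℝ)) ∧
    (∃! u, ∀ v, a u v + (inner ℝ (B u) v : ℝ) = ℓ v) := by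
  classical
  have hadiff : ∀ u v w : V, a u w - a v w = a (u - v) w := by
    intro u v w
    exact ((ha1 w).mk' _ |>.map_sub u v).symm
  -- Part 1: strict monotonicity
  have part1 : ∀ u v, u ≠ v →
      0 < (a u (u - v) + (inner ℝ (B u) (u - v) : ℝ))
            - (a v (u - v) + (inner ℝ (B v) (u - v) : ℝ)) := by
    intro u v huv
    have h1 : α * ‖u - v‖ ^ 2 ≤ a (u - v) (u - v) := hcoer _
    have h2 := hmono u v
    have h3 : (inner ℝ (B u) (u - v) : ℝ) - inner ℝ (B v) (u - v)
        = inner ℝ (B u - B v) (u - v) := (inner_sub_left _ _ _).symm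
    have h4 : (0:ℝ) < ‖u - v‖ ^ 2 := by
      have : u - v ≠ 0 := sub_ne_zero.mpr huv
      exact pow_pos (norm_pos_iff.mpr this) 2
    have := hadiff u v (u - v)
    nlinarith
  -- Part 2: coercivity
  have part2 : ∀ C : ℝ, ∃ R : ℝ, ∀ v, R ≤ ‖v‖ → C * ‖v‖ ≤ a v v + (inner ℝ (B v) v : ℝ) := by
    intro C
    refine ⟨(C + ‖B 0‖) / α, fun v hv => ?_⟩
    have h1 : α * ‖v‖ ^ 2 ≤ a v v := hcoer v
    have h2 : 0 ≤ (inner ℝ (B v - B 0) (v - 0) : ℝ) := hmono v 0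
    have h2' : (inner ℝ (B v - B 0) (v - 0) : ℝ) = inner ℝ (B v) v - inner ℝ (B 0) v := by
      rw [sub_zero, inner_sub_left]
    have h3 : (inner ℝ (B 0) v : ℝ) ≥ -(‖B 0‖ * ‖v‖) := by
      have := abs_real_inner_le_norm (B 0) v
      have := neg_abs_le (inner ℝ (B 0) v : ℝ)
      linarith [abs_real_inner_le_norm (B 0) v]
    have hv' : C + ‖B 0‖ ≤ α * ‖v‖ := by
      rw [div_le_iff₀ hα] at hv
      linarith [mul_comm α ‖v‖]
    have hvn : 0 ≤ ‖v‖ := norm_nonneg v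
    nlinarith
  refine ⟨part1, part2, ?_⟩
  -- Part 3: existence and uniqueness via Banach fixed point
  set K : ℝ := |M| + (L : ℝ) + α with hKdef
  have hK0 : 0 < K := by positivity
  -- the continuous linear map v ↦ a u v
  let Φ : V → V →L[ℝ] ℝ := fun u =>
    LinearMap.mkContinuous ((ha2 u).mk' _) (M * ‖u‖)
      (fun v => by simpa [Real.norm_eq_abs, mul_assoc] using hcont u v)
  have hΦ : ∀ u v, Φ u v = a u v := fun u v => rfl
  let d := (InnerProductSpace.toDual ℝ V).symm
  let A : V → V := fun u => d (Φ u) + B u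
  have hA : ∀ u v, (inner ℝ (A u) v : ℝ) = a u v + inner ℝ (B u) v := by
    intro u v
    simp only [A, inner_add_left]
    rw [InnerProductSpace.toDual_symm_apply, hΦ]
  -- strong monotonicity
  have hsm : ∀ u v, α * ‖u - v‖ ^ 2 ≤ (inner ℝ (A u - A v) (u - v) : ℝ) := by
    intro u v
    have h1 : (inner ℝ (A u - A v) (u - v) : ℝ)
        = a (u - v) (u - v) + inner ℝ (B u - B v) (u - v) := by
      rw [inner_sub_left, hA, hA, inner_sub_left, ← hadiff u v (u - v)]
      ring
    have := hmono u v
    have := hcoer (u - v)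
    linarith
  -- Lipschitz
  have hAl : ∀ u v, ‖A u - A v‖ ≤ K * ‖u - v‖ := by
    intro u v
    have h1 : ‖Φ u - Φ v‖ ≤ |M| * ‖u - v‖ := by
      refine ContinuousLinearMap.opNorm_le_bound _ (by positivity) (fun w => ?_)
      have he : (Φ u - Φ v) w = a (u - v) w := by
        simp only [ContinuousLinearMap.sub_apply, hΦ]
        rw [hadiff]
      rw [he, Real.norm_eq_abs]
      calc |a (u - v) w| ≤ M * ‖u - v‖ * ‖w‖ := hcont _ _
        _ ≤ |M| * ‖u - v‖ * ‖w‖ := by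
            have : M ≤ |M| := le_abs_self M
            have h := mul_nonneg (norm_nonneg (u - v)) (norm_nonneg w)
            nlinarith
    have h2 : ‖B u - B v‖ ≤ (L : ℝ) * ‖u - v‖ := by
      have := hlip.dist_le_mul u v
      simpa [dist_eq_norm] using this
    have h3 : A u - A v = d (Φ u - Φ v) + (B u - B v) := by
      simp only [A, map_sub]
      abel
    calc ‖A u - A v‖ = ‖d (Φ u - Φ v) + (B u - B v)‖ := by rw [h3]
      _ ≤ ‖d (Φ u - Φ v)‖ + ‖B u - B v‖ := norm_add_le _ _
      _ = ‖Φ u - Φ v‖ + ‖B u - B v‖ := by rw [d.norm_map]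
      _ ≤ |M| * ‖u - v‖ + (L : ℝ) * ‖u - v‖ := add_le_add h1 h2
      _ ≤ K * ‖u - v‖ := by nlinarith [norm_nonneg (u - v)]
  set f : V := d ℓ with hfdef
  set ρ : ℝ := α / K ^ 2 with hρdef
  have hρ0 : 0 < ρ := by positivity
  set T : V → V := fun u => u - ρ • (A u - f) with hTdef
  set c2 : ℝ := 1 - α ^ 2 / K ^ 2 with hc2def
  have hαK : α ≤ K := by
    have : (0:ℝ) ≤ |M| + (L : ℝ) := by positivity
    linarith
  have hc2_nonneg : 0 ≤ c2 := by
    rw [hc2def]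
    have h1 : α ^ 2 ≤ K ^ 2 := by nlinarith
    have h2 : α ^ 2 / K ^ 2 ≤ 1 := by
      rw [div_le_one (by positivity)]; exact h1
    linarith
  have hc2_lt : c2 < 1 := by
    rw [hc2def]
    have : 0 < α ^ 2 / K ^ 2 := by positivity
    linarith
  -- contraction estimate
  have key : ∀ u v, ‖T u - T v‖ ^ 2 ≤ c2 * ‖u - v‖ ^ 2 := by
    intro u v
    have hTe : T u - T v = (u - v) - ρ • (A u - A v) := by
      simp only [T, smul_sub]
      abel
    rw [hTe, norm_sub_sq_real]
    have e1 : (inner ℝ (u - v) (ρ • (A u - A v)) : ℝ) = ρ * inner ℝ (A u - A v) (u - v) := by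
      rw [real_inner_smul_right, real_inner_comm]
    have e2 : ‖ρ • (A u - A v)‖ ^ 2 = ρ ^ 2 * ‖A u - A v‖ ^ 2 := by
      rw [norm_smul, Real.norm_eq_abs, mul_pow, sq_abs]
    rw [e1, e2]
    have b1 : α * ‖u - v‖ ^ 2 ≤ (inner ℝ (A u - A v) (u - v) : ℝ) := hsm u v
    have b2 : ‖A u - A v‖ ^ 2 ≤ K ^ 2 * ‖u - v‖ ^ 2 := by
      have h := hAl u v
      nlinarith [norm_nonneg (A u - A v), norm_nonneg (u - v)]
    have harith : ‖u - v‖ ^ 2 - 2 * (ρ * (α * ‖u - v‖ ^ 2)) + ρ ^ 2 * (K ^ 2 * ‖u - v‖ ^ 2)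
        = c2 * ‖u - v‖ ^ 2 := by
      rw [hρdef, hc2def]
      field_simp
      ring
    nlinarith [sq_nonneg ρ]
  set c : ℝ := Real.sqrt c2 with hcdef
  have hc0 : 0 ≤ c := Real.sqrt_nonneg _
  have hc1 : c < 1 := by
    rw [hcdef]
    calc Real.sqrt c2 < Real.sqrt 1 := Real.sqrt_lt_sqrt hc2_nonneg hc2_lt
      _ = 1 := Real.sqrt_one
  have hTlip : LipschitzWith ⟨c, hc0⟩ T := by
    refine LipschitzWith.of_dist_le_mul (fun x y => ?_)
    rw [dist_eq_norm, dist_eq_norm]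
    calc ‖T x - T y‖ = Real.sqrt (‖T x - T y‖ ^ 2) := (Real.sqrt_sq (norm_nonneg _)).symm
      _ ≤ Real.sqrt (c2 * ‖x - y‖ ^ 2) := Real.sqrt_le_sqrt (key x y)
      _ = c * ‖x - y‖ := by
          rw [Real.sqrt_mul hc2_nonneg, Real.sqrt_sq (norm_nonneg _)]
  have hcontr : ContractingWith ⟨c, hc0⟩ T := ⟨by exact_mod_cast hc1, hTlip⟩
  have : Nonempty V := ⟨0⟩
  set u₀ : V := hcontr.fixedPoint T with hu₀
  have hfix : T u₀ = u₀ := hcontr.fixedPoint_isFixedPt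
  have hAu : A u₀ = f := by
    have : ρ • (A u₀ - f) = 0 := by
      have := hfix
      simp only [T] at this
      have h := sub_eq_self.mp this
      exact h
    rcases smul_eq_zero.mp this with h | h
    · exact absurd h (ne_of_gt hρ0)
    · exact sub_eq_zero.mp h
  have hsol : ∀ v, a u₀ v + (inner ℝ (B u₀) v : ℝ) = ℓ v := by
    intro v
    rw [← hA, hAu, hfdef]
    exact InnerProductSpace.toDual_symm_apply
  refine ⟨u₀, hsol, fun y hy => ?_⟩
  by_contra hne
  have h := part1 y u₀ hne
  have h1 := hy (y - u₀)
  have h2 := hsol (y - u₀)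
  rw [h1, h2] at h
  simp at h
end

section
/- Let V be a Hilbert space, U ⊆ V nonempty closed convex, a : V × V → ℝ continuous, symmetric, coercive bilinear form with coercivity constant α > 0, ℓ ∈ V', and for κ > 0 let u_κ solve the penalized equation a(u_κ, v) + (1/κ)⟨P u_κ, v⟩ = ℓ(v) for all v ∈ V, where P : V → V' is monotone, vanishes on U (⟨Pv, w⟩ = 0 whenever v ∈ U), and satisfies ⟨Pv, v - u⟩ ≥ 0 for the solution u ∈ U of the variational inequality a(u, v - u) ≥ ℓ(v - u) (v ∈ U). Then α‖u_κ - u‖² ≤ ℓ(u_κ - u) - a(u, u_κ - u), and consequently if u_κ ⇀ u weakly in V then u_κ → u strongly in V. -/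
open Filter

/-- Penalty-method energy estimate and strong convergence: if `u_κ` solves the
penalized equation `a(u_κ, v) + (1/κ)⟨P u_κ, v⟩ = ℓ(v)` with `P` monotone, vanishing
on `U`, and `⟨Pv, v-u⟩ ≥ 0` for the solution `u` of the variational inequality, then
`α‖u_κ - u‖² ≤ ℓ(u_κ - u) - a(u, u_κ - u)`, and if `u_κ ⇀ u` weakly then `u_κ → u`
strongly. -/
theorem penalty_strong_convergence {V : Type*} [NormedAddCommGroup V]
    [InnerProductSpace ℝ V] [CompleteSpace V]
    (U : Set V) (hUne : U.Nonempty) (hUcl : IsClosed U) (hUcv : Convex ℝ U)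
    (a : V → V → ℝ)
    (ha1 : ∀ v, IsLinearMap ℝ (fun u => a u v)) (ha2 : ∀ u, IsLinearMap ℝ (a u))
    (hsymm : ∀ u v, a u v = a v u)
    (M : ℝ) (hcont : ∀ u v, |a u v| ≤ M * ‖u‖ * ‖v‖)
    (α : ℝ) (hα : 0 < α) (hcoer : ∀ v, α * ‖v‖ ^ 2 ≤ a v v)
    (ℓ : V →L[ℝ] ℝ)
    (P : V → V → ℝ) (hPlin : ∀ v, IsLinearMap ℝ (P v))
    (hPmono : ∀ v w, 0 ≤ P v (v - w) - P w (v - w))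
    (hPU : ∀ v ∈ U, ∀ w, P v w = 0)
    (u : V) (hu : u ∈ U)
    (huVI : ∀ v ∈ U, ℓ (v - u) ≤ a u (v - u))
    (hPsign : ∀ v, 0 ≤ P v (v - u))
    (uk : ℝ → V)
    (heq : ∀ κ, 0 < κ → ∀ v, a (uk κ) v + (1 / κ) * P (uk κ) v = ℓ v) :
    (∀ κ, 0 < κ → α * ‖uk κ - u‖ ^ 2 ≤ ℓ (uk κ - u) - a u (uk κ - u)) ∧
    ((∀ φ : V →L[ℝ] ℝ,
        Tendsto (fun κ => φ (uk κ)) (nhdsWithin 0 (Set.Ioi 0)) (nhds (φ u))) →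
      Tendsto uk (nhdsWithin 0 (Set.Ioi 0)) (nhds u)) := by

  have key : ∀ κ, 0 < κ → α * ‖uk κ - u‖ ^ 2 ≤ ℓ (uk κ - u) - a u (uk κ - u) := by
    intro κ hκ
    have hlin := ha1 (uk κ - u)
    have hsub : a (uk κ - u) (uk κ - u) = a (uk κ) (uk κ - u) - a u (uk κ - u) := by
      have := hlin.map_sub (uk κ) u
      simpa using this
    have heqv := heq κ hκ (uk κ - u)
    have hP : 0 ≤ (1 / κ) * P (uk κ) (uk κ - u) :=
      mul_nonneg (by positivity) (hPsign (uk κ))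
    have h1 : a (uk κ) (uk κ - u) ≤ ℓ (uk κ - u) := by linarith
    calc α * ‖uk κ - u‖ ^ 2 ≤ a (uk κ - u) (uk κ - u) := hcoer _
      _ = a (uk κ) (uk κ - u) - a u (uk κ - u) := hsub
      _ ≤ ℓ (uk κ - u) - a u (uk κ - u) := by linarith
  refine ⟨key, ?_⟩
  intro hweak
  -- the functional v ↦ a u v is continuous linear
  let A : V →L[ℝ] ℝ := LinearMap.mkContinuous (IsLinearMap.mk' _ (ha2 u)) (M * ‖u‖)
    (fun v => by simpa [abs_of_nonneg, mul_assoc] using (abs_le.1 (by simpa [mul_assoc] using hcont u v)).2)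
  have hA : ∀ v, A v = a u v := fun v => rfl
  have hφ := hweak (ℓ - A)
  have hRHS : Tendsto (fun κ => ℓ (uk κ - u) - a u (uk κ - u))
      (nhdsWithin 0 (Set.Ioi 0)) (nhds 0) := by
    have : Tendsto (fun κ => (ℓ - A) (uk κ) - (ℓ - A) u)
        (nhdsWithin 0 (Set.Ioi 0)) (nhds ((ℓ - A) u - (ℓ - A) u)) :=
      hφ.sub tendsto_const_nhds
    simp only [sub_self] at this
    convert this using 2 with κ
    simp [hA, map_sub, (ha2 u).map_sub]
    ring
  have hsq : Tendsto (fun κ => ‖uk κ - u‖ ^ 2) (nhdsWithin 0 (Set.Ioi 0)) (nhds 0) := by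
    have h0 : Tendsto (fun κ => α * ‖uk κ - u‖ ^ 2) (nhdsWithin 0 (Set.Ioi 0)) (nhds 0) := by
      apply squeeze_zero' ?_ ?_ hRHS
      · filter_upwards [self_mem_nhdsWithin] with κ hκ
        positivity
      · filter_upwards [self_mem_nhdsWithin] with κ hκ
        exact key κ hκ
    have := h0.const_mul (α⁻¹)
    simpa [mul_comm, ← mul_assoc, inv_mul_cancel₀ hα.ne', mul_inv_cancel₀ hα.ne'] using this
  have hnorm : Tendsto (fun κ => ‖uk κ - u‖) (nhdsWithin 0 (Set.Ioi 0)) (nhds 0) := by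
    have := (Real.continuous_sqrt.tendsto 0).comp hsq
    simpa [Function.comp_def, Real.sqrt_sq (norm_nonneg _)] using this
  rw [tendsto_iff_norm_sub_tendsto_zero]
  exact hnorm
end

section
/- Let λ ≥ 0 and μ > 0, and let (a^{αβ}) be a symmetric positive-definite 2×2 matrix. Define A^{αβστ} = λ a^{αβ} a^{στ} + μ(a^{ασ} a^{βτ} + a^{ατ} a^{βσ}), A^{αβ33} = λ a^{αβ}, A^{α3σ3} = μ a^{ασ}, A^{3333} = λ + 2μ, A^{αβσ3} = A^{α333} = 0 (extended by the symmetries A^{ijkl} = A^{jikl} = A^{klij}). Then there exists C₀ > 0 such that Σ_{i,j} |t_{ij}|² ≤ C₀ A^{ijkl} t_{kl} t_{ij} for all symmetric 3×3 matrices (t_{ij}). -/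
/-- Extension of a 2×2 matrix `(a^{αβ})` to a 3×3 matrix with `g^{α3} = g^{3α} = 0`
and `g^{33} = 1`. -/
def gext (a : Fin 2 → Fin 2 → ℝ) : Fin 3 → Fin 3 → ℝ := fun i j =>
  if hi : (i : ℕ) < 2 then
    (if hj : (j : ℕ) < 2 then a ⟨i, hi⟩ ⟨j, hj⟩ else 0)
  else (if (j : ℕ) < 2 then 0 else 1)

section aux

lemma gext00 (a : Fin 2 → Fin 2 → ℝ) : gext a 0 0 = a 0 0 := rfl
lemma gext01 (a : Fin 2 → Fin 2 → ℝ) : gext a 0 1 = a 0 1 := rfl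
lemma gext10 (a : Fin 2 → Fin 2 → ℝ) : gext a 1 0 = a 1 0 := rfl
lemma gext11 (a : Fin 2 → Fin 2 → ℝ) : gext a 1 1 = a 1 1 := rfl
lemma gext02 (a : Fin 2 → Fin 2 → ℝ) : gext a 0 2 = 0 := rfl
lemma gext20 (a : Fin 2 → Fin 2 → ℝ) : gext a 2 0 = 0 := rfl
lemma gext12 (a : Fin 2 → Fin 2 → ℝ) : gext a 1 2 = 0 := rfl
lemma gext21 (a : Fin 2 → Fin 2 → ℝ) : gext a 2 1 = 0 := rfl
lemma gext22 (a : Fin 2 → Fin 2 → ℝ) : gext a 2 2 = 1 := rfl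

/-- The structural identity: for symmetric `t`, the elasticity quadratic form equals
`lam·L² + 2μ·(E + 2·Qv + t₂₂²)`. -/
lemma elasticity_expand (a : Fin 2 → Fin 2 → ℝ) (hsym : ∀ α β, a α β = a β α)
    (lam mu : ℝ) (t : Fin 3 → Fin 3 → ℝ) (ht : ∀ i j, t i j = t j i) :
    ∑ i, ∑ j, ∑ k, ∑ l,
        (lam * gext a i j * gext a k l
          + mu * (gext a i k * gext a j l + gext a i l * gext a j k))
          * t k l * t i j
      = lam * (a 0 0 * t 0 0 + 2 * a 0 1 * t 0 1 + a 1 1 * t 1 1 + t 2 2) ^ 2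
        + 2 * mu * (((a 0 0 * t 0 0 + a 0 1 * t 0 1) ^ 2
            + 2 * (a 0 0 * t 0 1 + a 0 1 * t 1 1) * (a 0 1 * t 0 0 + a 1 1 * t 0 1)
            + (a 0 1 * t 0 1 + a 1 1 * t 1 1) ^ 2)
          + 2 * (a 0 0 * t 0 2 ^ 2 + 2 * a 0 1 * t 0 2 * t 1 2 + a 1 1 * t 1 2 ^ 2)
          + t 2 2 ^ 2) := by
  simp only [Fin.sum_univ_three, gext00, gext01, gext10, gext11, gext02, gext20,
    gext12, gext21, gext22]
  rw [ht 1 0, ht 2 0, ht 2 1, hsym 1 0]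
  ring

/-- nonnegativity of the 2×2 trace form `tr(aSaS)`. -/
lemma E_nonneg (p q r x y z : ℝ) (hp : 0 < p) (hd : 0 < p * r - q ^ 2) :
    0 ≤ (p * x + q * y) ^ 2 + 2 * (p * y + q * z) * (q * x + r * y)
        + (q * y + r * z) ^ 2 := by
  nlinarith [sq_nonneg (p ^ 2 * x + 2 * p * q * y + q ^ 2 * z),
    mul_nonneg hd.le (sq_nonneg (p * y + q * z)),
    mul_nonneg (mul_nonneg hd.le hd.le) (sq_nonneg z), mul_pos hp hp]

lemma E_pos (p q r x y z : ℝ) (hp : 0 < p) (hd : 0 < p * r - q ^ 2)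
    (hne : x ≠ 0 ∨ y ≠ 0 ∨ z ≠ 0) :
    0 < (p * x + q * y) ^ 2 + 2 * (p * y + q * z) * (q * x + r * y)
        + (q * y + r * z) ^ 2 := by
  by_cases hz : z = 0
  · by_cases hy : y = 0
    · have hx : x ≠ 0 := by tauto
      have hx2 : 0 < x ^ 2 := by positivity
      subst hz hy
      nlinarith [mul_pos (mul_pos hp hp) hx2]
    · have hy2 : 0 < y ^ 2 := by positivity
      subst hz
      nlinarith [sq_nonneg (p ^ 2 * x + 2 * p * q * y),
        mul_pos (mul_pos hd (mul_pos hp hp)) hy2, mul_pos hp hp]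
  · have hz2 : 0 < z ^ 2 := by positivity
    nlinarith [sq_nonneg (p ^ 2 * x + 2 * p * q * y + q ^ 2 * z),
      mul_nonneg hd.le (sq_nonneg (p * y + q * z)),
      mul_pos (mul_pos hd hd) hz2, mul_pos hp hp]

lemma Qv_nonneg (p q r u w : ℝ) (hp : 0 < p) (hd : 0 < p * r - q ^ 2) :
    0 ≤ p * u ^ 2 + 2 * q * u * w + r * w ^ 2 := by
  nlinarith [sq_nonneg (p * u + q * w), mul_nonneg hd.le (sq_nonneg w)]

lemma Qv_pos (p q r u w : ℝ) (hp : 0 < p) (hd : 0 < p * r - q ^ 2)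
    (hne : u ≠ 0 ∨ w ≠ 0) :
    0 < p * u ^ 2 + 2 * q * u * w + r * w ^ 2 := by
  by_cases hw : w = 0
  · have hu : u ≠ 0 := by tauto
    have hu2 : 0 < u ^ 2 := by positivity
    subst hw
    nlinarith [mul_pos hp hu2]
  · have hw2 : 0 < w ^ 2 := by positivity
    nlinarith [sq_nonneg (p * u + q * w), mul_pos hd hw2]

/-- Strict positivity of the expanded elasticity quadratic form. -/
lemma key_pos (p q r lam mu x y z u w s : ℝ) (hp : 0 < p) (hd : 0 < p * r - q ^ 2)
    (hlam : 0 ≤ lam) (hmu : 0 < mu)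
    (hne : x ≠ 0 ∨ y ≠ 0 ∨ z ≠ 0 ∨ u ≠ 0 ∨ w ≠ 0 ∨ s ≠ 0) :
    0 < lam * (p * x + 2 * q * y + r * z + s) ^ 2
        + 2 * mu * (((p * x + q * y) ^ 2
            + 2 * (p * y + q * z) * (q * x + r * y) + (q * y + r * z) ^ 2)
          + 2 * (p * u ^ 2 + 2 * q * u * w + r * w ^ 2) + s ^ 2) := by
  have hE0 := E_nonneg p q r x y z hp hd
  have hQv0 := Qv_nonneg p q r u w hp hd
  have hP : 0 < ((p * x + q * y) ^ 2
      + 2 * (p * y + q * z) * (q * x + r * y) + (q * y + r * z) ^ 2)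
      + 2 * (p * u ^ 2 + 2 * q * u * w + r * w ^ 2) + s ^ 2 := by
    rcases hne with hx | hy | hz | hu | hw | hs
    · nlinarith [E_pos p q r x y z hp hd (Or.inl hx), sq_nonneg s]
    · nlinarith [E_pos p q r x y z hp hd (Or.inr (Or.inl hy)), sq_nonneg s]
    · nlinarith [E_pos p q r x y z hp hd (Or.inr (Or.inr hz)), sq_nonneg s]
    · nlinarith [Qv_pos p q r u w hp hd (Or.inl hu), sq_nonneg s]
    · nlinarith [Qv_pos p q r u w hp hd (Or.inr hw), sq_nonneg s]
    · have : 0 < s ^ 2 := by positivity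
      nlinarith
  nlinarith [mul_nonneg hlam (sq_nonneg (p * x + 2 * q * y + r * z + s)),
    mul_pos hmu hP]

end aux

/-- Uniform positive-definiteness of the three-dimensional elasticity tensor
`A^{ijkl} = λ g^{ij} g^{kl} + μ (g^{ik} g^{jl} + g^{il} g^{jk})` (whose entries are
`A^{αβστ} = λa^{αβ}a^{στ} + μ(a^{ασ}a^{βτ} + a^{ατ}a^{βσ})`, `A^{αβ33} = λa^{αβ}`,
`A^{α3σ3} = μa^{ασ}`, `A^{3333} = λ + 2μ`, `A^{αβσ3} = A^{α333} = 0`): there is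
`C₀ > 0` with `Σ|t_{ij}|² ≤ C₀ A^{ijkl} t_{kl} t_{ij}` for all symmetric `(t_{ij})`. -/
theorem elasticity_tensor_positive_definite
    (a : Fin 2 → Fin 2 → ℝ) (hsym : ∀ α β, a α β = a β α)
    (hpos : ∀ t : Fin 2 → ℝ, t ≠ 0 → 0 < ∑ α, ∑ β, a α β * t α * t β)
    (lam mu : ℝ) (hlam : 0 ≤ lam) (hmu : 0 < mu) :
    ∃ C₀ > (0 : ℝ), ∀ t : Fin 3 → Fin 3 → ℝ, (∀ i j, t i j = t j i) →
      ∑ i, ∑ j, (t i j) ^ 2 ≤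
        C₀ * ∑ i, ∑ j, ∑ k, ∑ l,
          (lam * gext a i j * gext a k l
            + mu * (gext a i k * gext a j l + gext a i l * gext a j k))
            * t k l * t i j := by
  -- positivity data for the 2×2 matrix
  have hp : 0 < a 0 0 := by
    have h := hpos ![1, 0] (by
      intro h
      have := congrFun h 0
      simp at this)
    simpa [Fin.sum_univ_two] using h
  have hr : 0 < a 1 1 := by
    have h := hpos ![0, 1] (by
      intro h
      have := congrFun h 1
      simp at this)
    simpa [Fin.sum_univ_two] using h
  have hd : 0 < a 0 0 * a 1 1 - a 0 1 ^ 2 := by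
    have h := hpos ![a 0 1, -(a 0 0)] (by
      intro h
      have := congrFun h 1
      simp at this
      exact absurd this (ne_of_gt hp))
    simp only [Fin.sum_univ_two, Matrix.cons_val_zero, Matrix.cons_val_one,
      Matrix.head_cons] at h
    rw [hsym 1 0] at h
    nlinarith [h, hp]
  -- the quadratic form and the squared norm
  set Qf : (Fin 3 → Fin 3 → ℝ) → ℝ := fun t => ∑ i, ∑ j, ∑ k, ∑ l,
      (lam * gext a i j * gext a k l
        + mu * (gext a i k * gext a j l + gext a i l * gext a j k))
        * t k l * t i j with hQf
  set Nf : (Fin 3 → Fin 3 → ℝ) → ℝ := fun t => ∑ i, ∑ j, (t i j) ^ 2 with hNf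
  -- positivity of Qf on symmetric nonzero matrices
  have hQpos : ∀ t : Fin 3 → Fin 3 → ℝ, (∀ i j, t i j = t j i) → t ≠ 0 → 0 < Qf t := by
    intro t ht ht0
    have hne : ∃ i j, t i j ≠ 0 := by
      by_contra h
      push_neg at h
      exact ht0 (funext fun i => funext fun j => h i j)
    obtain ⟨i, j, hij⟩ := hne
    have hkey : t 0 0 ≠ 0 ∨ t 0 1 ≠ 0 ∨ t 1 1 ≠ 0 ∨ t 0 2 ≠ 0 ∨ t 1 2 ≠ 0
        ∨ t 2 2 ≠ 0 := by
      fin_cases i <;> fin_cases j <;>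
        first
          | exact Or.inl hij
          | exact Or.inr (Or.inl hij)
          | exact Or.inr (Or.inr (Or.inl hij))
          | exact Or.inr (Or.inr (Or.inr (Or.inl hij)))
          | exact Or.inr (Or.inr (Or.inr (Or.inr (Or.inl hij))))
          | exact Or.inr (Or.inr (Or.inr (Or.inr (Or.inr hij))))
          | (rw [ht] at hij; first
              | exact Or.inr (Or.inl hij)
              | exact Or.inr (Or.inr (Or.inr (Or.inl hij)))
              | exact Or.inr (Or.inr (Or.inr (Or.inr (Or.inl hij)))))
    simp only [hQf]
    rw [elasticity_expand a hsym lam mu t ht]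
    exact key_pos (a 0 0) (a 0 1) (a 1 1) lam mu (t 0 0) (t 0 1) (t 1 1)
      (t 0 2) (t 1 2) (t 2 2) hp hd hlam hmu hkey
  -- continuity
  have hQcont : Continuous Qf := by
    apply continuous_finset_sum
    intro i _
    apply continuous_finset_sum
    intro j _
    apply continuous_finset_sum
    intro k _
    apply continuous_finset_sum
    intro l _
    exact (continuous_const.mul (continuous_apply_apply k l)).mul
      (continuous_apply_apply i j)
  have hNcont : Continuous Nf := by
    apply continuous_finset_sum
    intro i _
    apply continuous_finset_sum
    intro j _
    exact (continuous_apply_apply i j).pow 2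
  -- the compact set
  set K : Set (Fin 3 → Fin 3 → ℝ) := {t | (∀ i j, t i j = t j i) ∧ Nf t = 1} with hK
  have hKclosed : IsClosed K := by
    have h1 : IsClosed {t : Fin 3 → Fin 3 → ℝ | ∀ i j, t i j = t j i} := by
      have : {t : Fin 3 → Fin 3 → ℝ | ∀ i j, t i j = t j i} = ⋂ i, ⋂ j, {t : Fin 3 → Fin 3 → ℝ | t i j = t j i} := by
        ext t; simp [Set.mem_iInter]
      rw [this]
      exact isClosed_iInter fun i => isClosed_iInter fun j =>
        isClosed_eq (continuous_apply_apply i j) (continuous_apply_apply j i)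
    exact h1.inter (isClosed_eq hNcont continuous_const)
  have hKsub : K ⊆ Metric.closedBall 0 1 := by
    intro t htK
    rw [Metric.mem_closedBall, dist_zero_right]
    rw [pi_norm_le_iff_of_nonneg zero_le_one]
    intro i
    rw [pi_norm_le_iff_of_nonneg zero_le_one]
    intro j
    rw [Real.norm_eq_abs]
    have h1 : t i j ^ 2 ≤ ∑ j', t i j' ^ 2 :=
      Finset.single_le_sum (f := fun j' => t i j' ^ 2)
        (fun _ _ => sq_nonneg _) (Finset.mem_univ j)
    have h2 : ∑ j', t i j' ^ 2 ≤ Nf t := by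
      simp only [hNf]
      exact Finset.single_le_sum
        (f := fun i' => ∑ j', t i' j' ^ 2)
        (fun i' _ => Finset.sum_nonneg fun _ _ => sq_nonneg _) (Finset.mem_univ i)
    have h3 : t i j ^ 2 ≤ 1 := by
      rw [hK] at htK
      calc t i j ^ 2 ≤ Nf t := le_trans h1 h2
        _ = 1 := htK.2
    nlinarith [abs_nonneg (t i j), sq_abs (t i j)]
  have hKcompact : IsCompact K :=
    (isCompact_closedBall (0 : Fin 3 → Fin 3 → ℝ) 1).of_isClosed_subset hKclosed hKsub
  have hKne : K.Nonempty := by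
    refine ⟨fun i j => if i = 2 then if j = 2 then 1 else 0 else 0, ?_, ?_⟩
    · intro i j
      simp only
      by_cases h1 : i = 2 <;> by_cases h2 : j = 2 <;> simp [h1, h2]
    · simp only [hNf]
      rw [Fin.sum_univ_three, Fin.sum_univ_three, Fin.sum_univ_three]
      norm_num [eq_false (by decide : ¬ ((0:Fin 3) = 2)),
        eq_false (by decide : ¬ ((1:Fin 3) = 2))]
  -- minimum on K
  obtain ⟨t₀, ht₀K, hmin⟩ := hKcompact.exists_isMinOn hKne hQcont.continuousOn
  have h0 : Nf (0 : Fin 3 → Fin 3 → ℝ) = 0 := by simp [hNf]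
  have ht₀ne : t₀ ≠ 0 := by
    intro h
    have h1 := ht₀K.2
    rw [h, h0] at h1
    norm_num at h1
  have hm : 0 < Qf t₀ := hQpos t₀ ht₀K.1 ht₀ne
  refine ⟨(Qf t₀)⁻¹, inv_pos.mpr hm, ?_⟩
  intro t ht
  by_cases ht0 : t = 0
  · subst ht0
    simp
  · -- normalize
    have hNt : 0 < Nf t := by
      have hne : ∃ i j, t i j ≠ 0 := by
        by_contra h
        push_neg at h
        exact ht0 (funext fun i => funext fun j => h i j)
      obtain ⟨i, j, hij⟩ := hne
      have h1 : t i j ^ 2 ≤ Nf t := by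
        simp only [hNf]
        calc t i j ^ 2 ≤ ∑ j', t i j' ^ 2 :=
              Finset.single_le_sum (f := fun j' => t i j' ^ 2)
                (fun _ _ => sq_nonneg _) (Finset.mem_univ j)
          _ ≤ ∑ i', ∑ j', t i' j' ^ 2 :=
              Finset.single_le_sum
                (f := fun i' => ∑ j', t i' j' ^ 2)
                (fun i' _ => Finset.sum_nonneg fun _ _ => sq_nonneg _)
                (Finset.mem_univ i)
      have : 0 < t i j ^ 2 := by positivity
      linarith
    have hQscale : ∀ (u : Fin 3 → Fin 3 → ℝ) (k : ℝ), Qf (fun i j => k * u i j) = k ^ 2 * Qf u := by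
      intro u k
      simp only [hQf, Finset.mul_sum]
      exact Finset.sum_congr rfl fun i _ => Finset.sum_congr rfl fun j _ =>
        Finset.sum_congr rfl fun k' _ => Finset.sum_congr rfl fun l _ => by ring
    have hNscale : ∀ (u : Fin 3 → Fin 3 → ℝ) (k : ℝ), Nf (fun i j => k * u i j) = k ^ 2 * Nf u := by
      intro u k
      simp only [hNf, Finset.mul_sum]
      exact Finset.sum_congr rfl fun i _ => Finset.sum_congr rfl fun j _ => by ring
    set c : ℝ := Real.sqrt (Nf t) with hc
    have hcpos : 0 < c := Real.sqrt_pos.mpr hNt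
    have hcne : c ≠ 0 := ne_of_gt hcpos
    have hc2 : c ^ 2 = Nf t := Real.sq_sqrt hNt.le
    set s : Fin 3 → Fin 3 → ℝ := fun i j => c⁻¹ * t i j with hs
    have hsK : s ∈ K := by
      constructor
      · intro i j
        simp only [hs]
        rw [ht i j]
      · show Nf s = 1
        rw [hs, hNscale t c⁻¹, ← hc2]
        field_simp
    have hQs : Qf s = c⁻¹ ^ 2 * Qf t := by rw [hs, hQscale t c⁻¹]
    have hmins : Qf t₀ ≤ Qf s := hmin hsK
    rw [hQs] at hmins
    have hQt : Qf t₀ * Nf t ≤ Qf t := by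
      rw [← hc2]
      have h2 := mul_le_mul_of_nonneg_right hmins (sq_nonneg c)
      have h3 : c⁻¹ ^ 2 * Qf t * c ^ 2 = Qf t := by
        field_simp
      linarith [h2, h3.le, h3.ge]
    calc Nf t = (Qf t₀)⁻¹ * (Qf t₀ * Nf t) := by field_simp
      _ ≤ (Qf t₀)⁻¹ * Qf t := by
          apply mul_le_mul_of_nonneg_left hQt (inv_pos.mpr hm).le
end

section
/- Let λ ≥ 0, μ > 0 and (a^{αβ}) a symmetric positive-definite 2×2 matrix. Define the two-dimensional elasticity tensor a^{αβστ} = (4λμ/(λ+2μ)) a^{αβ} a^{στ} + 2μ(a^{ασ} a^{βτ} + a^{ατ} a^{βσ}). Then there exists c > 0 such that Σ_{α,β} |t_{αβ}|² ≤ c · a^{αβστ} t_{στ} t_{αβ} for all symmetric 2×2 matrices (t_{αβ}). -/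
lemma psdtr (A B C E F G : ℝ) (hA : 0 ≤ A) (hC : 0 ≤ C) (hE : 0 ≤ E) (hG : 0 ≤ G)
    (h1 : B^2 ≤ A*C) (h2 : F^2 ≤ E*G) : 0 ≤ A*E + 2*B*F + C*G := by
  nlinarith [sq_nonneg (A*E - C*G), mul_nonneg hA hE, mul_nonneg hC hG,
    mul_le_mul h1 h2 (sq_nonneg F) (mul_nonneg hA hC)]

lemma vecineq (p q r u v : ℝ) (hp : 0 < p) (hr : 0 < r) (hd : 0 < p*r - q^2) :
    (p*r - q^2) * (u^2 + v^2) ≤ (p+r) * (p*u^2 + 2*q*u*v + r*v^2) := by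
  have h : 0 < p^2 + q^2 := by positivity
  nlinarith [sq_nonneg ((p^2+q^2)*u + q*(p+r)*v), sq_nonneg ((p*r-q^2)*v), h]

lemma keyineq (p q r x y z : ℝ) (hp : 0 < p) (hr : 0 < r) (hd : 0 < p*r - q^2) :
    (p*r - q^2)^2 * (x^2 + 2*y^2 + z^2) ≤
      (p+r)^2 * ((p*x+q*y)^2 + 2*(p*y+q*z)*(q*x+r*y) + (q*y+r*z)^2) := by
  set d := p*r - q^2 with hdef
  set A := p*x^2 + 2*q*x*y + r*y^2 with hA
  set C := p*y^2 + 2*q*y*z + r*z^2 with hC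
  set B := p*x*y + q*x*z + q*y^2 + r*y*z with hB
  have hpr : 0 < p + r := by linarith
  have h1 : d*(x^2+y^2) ≤ (p+r)*A := vecineq p q r x y hp hr hd
  have h2 : d*(y^2+z^2) ≤ (p+r)*C := vecineq p q r y z hp hr hd
  have hA0 : 0 ≤ A := by nlinarith [mul_nonneg hd.le (add_nonneg (sq_nonneg x) (sq_nonneg y))]
  have hC0 : 0 ≤ C := by nlinarith [mul_nonneg hd.le (add_nonneg (sq_nonneg y) (sq_nonneg z))]
  have hACB : B^2 ≤ A*C := by
    have : A*C - B^2 = d*(x*z - y^2)^2 := by rw [hA, hC, hB, hdef]; ring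
    nlinarith [mul_nonneg hd.le (sq_nonneg (x*z - y^2))]
  have hEG : (q*(p+r))^2 ≤ (p^2+q^2)*(r^2+q^2) := by nlinarith [sq_nonneg d]
  have hmain : 0 ≤ A*(p^2+q^2) + 2*B*(q*(p+r)) + C*(r^2+q^2) :=
    psdtr A B C (p^2+q^2) (q*(p+r)) (r^2+q^2) hA0 hC0 (by positivity) (by positivity) hACB hEG
  have hid : A*(p^2+q^2) + 2*B*(q*(p+r)) + C*(r^2+q^2)
      = (p+r)*((p*x+q*y)^2 + 2*(p*y+q*z)*(q*x+r*y) + (q*y+r*z)^2) - d*(A+C) := by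
    rw [hA, hB, hC, hdef]; ring
  have hstep : d*(A+C) ≤ (p+r)*((p*x+q*y)^2 + 2*(p*y+q*z)*(q*x+r*y) + (q*y+r*z)^2) := by
    linarith [hid ▸ hmain]
  calc d^2*(x^2+2*y^2+z^2) = d*(d*(x^2+2*y^2+z^2)) := by ring
    _ ≤ d*((p+r)*(A+C)) := mul_le_mul_of_nonneg_left (by linarith) hd.le
    _ = (p+r)*(d*(A+C)) := by ring
    _ ≤ (p+r)*((p+r)*((p*x+q*y)^2 + 2*(p*y+q*z)*(q*x+r*y) + (q*y+r*z)^2)) :=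
        mul_le_mul_of_nonneg_left hstep hpr.le
    _ = (p+r)^2*((p*x+q*y)^2 + 2*(p*y+q*z)*(q*x+r*y) + (q*y+r*z)^2) := by ring

/-- Uniform positive-definiteness of the two-dimensional shell elasticity tensor
`a^{αβστ} = (4λμ/(λ+2μ)) a^{αβ} a^{στ} + 2μ(a^{ασ}a^{βτ} + a^{ατ}a^{βσ})`. -/
theorem two_dim_elasticity_tensor_positive_definite
    (a : Fin 2 → Fin 2 → ℝ) (hsym : ∀ α β, a α β = a β α)
    (hpos : ∀ t : Fin 2 → ℝ, t ≠ 0 → 0 < ∑ α, ∑ β, a α β * t α * t β)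
    (lam mu : ℝ) (hlam : 0 ≤ lam) (hmu : 0 < mu) :
    ∃ c > (0 : ℝ), ∀ t : Fin 2 → Fin 2 → ℝ, (∀ α β, t α β = t β α) →
      ∑ α, ∑ β, (t α β) ^ 2 ≤
        c * ∑ α, ∑ β, ∑ σ, ∑ τ,
          ((4 * lam * mu / (lam + 2 * mu)) * a α β * a σ τ
            + 2 * mu * (a α σ * a β τ + a α τ * a β σ))
            * t σ τ * t α β := by
  have hq : a 1 0 = a 0 1 := hsym 1 0
  have hp : 0 < a 0 0 := by
    have h := hpos ![1, 0] (by intro h; simpa using congrFun h 0)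
    simpa [Fin.sum_univ_two] using h
  have hr : 0 < a 1 1 := by
    have h := hpos ![0, 1] (by intro h; simpa using congrFun h 1)
    simpa [Fin.sum_univ_two] using h
  have hd : 0 < a 0 0 * a 1 1 - (a 0 1)^2 := by
    have h := hpos ![a 1 1, -(a 0 1)] (by intro h; simpa [hr.ne'] using congrFun h 0)
    simp [Fin.sum_univ_two, hq] at h
    nlinarith [h, hr]
  set p := a 0 0
  set q := a 0 1
  set r := a 1 1
  refine ⟨(p + r)^2 / (4 * mu * (p*r - q^2)^2), by positivity, fun t ht => ?_⟩
  have ht10 : t 1 0 = t 0 1 := ht 1 0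
  simp only [Fin.sum_univ_two, hq, ht10]
  set x := t 0 0
  set y := t 0 1
  set z := t 1 1
  rw [div_mul_eq_mul_div, le_div_iff₀ (by positivity)]
  have hL : 0 ≤ 4 * lam * mu / (lam + 2 * mu) := by
    apply div_nonneg (by positivity); linarith
  have h1 : (4*mu) * ((p*r - q^2)^2 * (x^2 + 2*y^2 + z^2)) ≤
      (4*mu) * ((p+r)^2 * ((p*x+q*y)^2 + 2*(p*y+q*z)*(q*x+r*y) + (q*y+r*z)^2)) :=
    mul_le_mul_of_nonneg_left (keyineq p q r x y z hp hr hd) (by positivity)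
  have h2 : 0 ≤ (p+r)^2 * ((4 * lam * mu / (lam + 2 * mu)) * (p*x+2*q*y+r*z)^2) :=
    mul_nonneg (sq_nonneg _) (mul_nonneg hL (sq_nonneg _))
  nlinarith [h1, h2]
end
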